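/- If X and Y are complete metric spaces and f₊ is lower semicontinuous on a neighbourhood of (x̄,ȳ), then, under conditions (P1)–(P2), the error bound modulus equals the uniform strict outer slope: Er f(x̄,ȳ) = \overline{|∇f|}^◇(x̄,ȳ). -/

import Mathlib

open Filter Metric Set Topology
open scoped Classical

noncomputable section

namespace HolderPaper

/-- Extended-real quotient `a / d` of an extended real by a nonnegative real,
with the convention that division by `0` yields `⊤`. -/
def equot (a : EReal) (d : ℝ) : EReal := if d = 0 then ⊤ else a * ((d⁻¹ : ℝ) : EReal)

section MetricDefs

variable {X Y : Type*} [MetricSpace X] [MetricSpace Y]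

/-- The asymmetric maximum-type distance `d_ρ((x,y),(u,v)) = max{d(x,u), ρ d(y,v)}`. -/
def drho (ρ : ℝ) (p q : X × Y) : ℝ := max (dist p.1 q.1) (ρ * dist p.2 q.2)

/-- Positive part `f₊`. -/
def fplus (f : X × Y → EReal) (p : X × Y) : EReal := max (f p) 0

/-- Condition (P1): `f(x,y) > 0` whenever `y ≠ ybar`. -/
def P1 (f : X × Y → EReal) (ybar : Y) : Prop := ∀ p : X × Y, p.2 ≠ ybar → 0 < f p

/-- Condition (P2): `liminf_{f(x,y)↓0} f(x,y)/d(y,ybar) > 0`. -/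
def P2 (f : X × Y → EReal) (ybar : Y) : Prop :=
  0 < liminf (fun p : X × Y => equot (f p) (dist p.2 ybar)) ((𝓝[>] (0 : EReal)).comap f)

/-- The lower 0-level set `S(f) = {x | f(x,ybar) ≤ 0}`. -/
def Sf (f : X × Y → EReal) (ybar : Y) : Set X := {x | f (x, ybar) ≤ 0}

/-- The error bound modulus `Er f(xbar,ybar)`:
`liminf` of `f(x,y)/d(x,S(f))` over pairs `(x,y)` with `f(x,y) > 0` as `x → xbar`. -/
def erMod (f : X × Y → EReal) (xbar : X) (ybar : Y) : EReal :=
  liminf (fun p : X × Y => equot (f p) (infDist p.1 (Sf f ybar)))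
    ((𝓝 xbar).comap Prod.fst ⊓ 𝓟 {p : X × Y | 0 < f p})

/-- `f` has an error bound w.r.t. `x` at `(xbar,ybar)` with constant `τ`. -/
def hasErrorBound (f : X × Y → EReal) (xbar : X) (ybar : Y) (τ : ℝ) : Prop :=
  ∃ U ∈ 𝓝 xbar, ∀ x ∈ U, ∀ y : Y, ((τ * infDist x (Sf f ybar) : ℝ) : EReal) ≤ fplus f (x, y)

/-- The nonlocal ρ-slope `|∇f|◇_ρ(x,y)` (set to `⊤` if `f(x,y) = ⊤`). -/
def nslope (f : X × Y → EReal) (ρ : ℝ) (p : X × Y) : EReal :=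
  if f p = ⊤ then ⊤
  else ⨆ (q : X × Y) (_ : q ≠ p), equot (max (f p - fplus f q) 0) (drho ρ p q)

/-- The (local) ρ-slope `|∇f|_ρ(x,y)`. -/
def lslope (f : X × Y → EReal) (ρ : ℝ) (p : X × Y) : EReal :=
  limsup (fun q : X × Y => equot (max (f p - f q) 0) (drho ρ q p)) (𝓝[≠] p)

/-- The uniform strict outer slope `\overline{|∇f|}^◇(xbar,ybar)`
(`lim_{ρ↓0}` of a quantity nonincreasing in `ρ`, i.e. the supremum over `ρ > 0`). -/
def uss (f : X × Y → EReal) (xbar : X) (ybar : Y) : EReal :=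
  ⨆ (ρ : ℝ) (_ : 0 < ρ),
    ⨅ (p : X × Y) (_ : dist p.1 xbar < ρ ∧ 0 < f p ∧ f p < (ρ : EReal)), nslope f ρ p

/-- The strict outer slope `\overline{|∇f|}^{>}(xbar,ybar)`. -/
def sos (f : X × Y → EReal) (xbar : X) (ybar : Y) : EReal :=
  ⨆ (ρ : ℝ) (_ : 0 < ρ),
    ⨅ (p : X × Y) (_ : dist p.1 xbar < ρ ∧ 0 < f p ∧ f p < (ρ : EReal)), lslope f ρ p

/-- The modified strict outer slope `\overline{|∇f|}^{>+}(xbar,ybar)`. -/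
def msos (f : X × Y → EReal) (xbar : X) (ybar : Y) : EReal :=
  ⨆ (ρ : ℝ) (_ : 0 < ρ),
    ⨅ (p : X × Y) (_ : dist p.1 xbar < ρ ∧ 0 < f p ∧ f p < (ρ : EReal)),
      max (lslope f ρ p) (equot (f p) (dist p.1 xbar))

/-- Graph of a set-valued mapping. -/
def gph (F : X → Set Y) : Set (X × Y) := {p | p.2 ∈ F p.1}

/-- Inverse image `F⁻¹(ybar)`. -/
def Finv (F : X → Set Y) (ybar : Y) : Set X := {x | ybar ∈ F x}

/-- The function `f(x,y) = (d(y,ybar))^q` on `gph F`, `+∞` elsewhere. -/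
def fFq (F : X → Set Y) (ybar : Y) (qq : ℝ) : X × Y → EReal :=
  fun p => if p ∈ gph F then ((dist p.2 ybar ^ qq : ℝ) : EReal) else ⊤

/-- The function `f(x,y) = ‖y - ybar‖` on `gph F`, `+∞` elsewhere (case `q = 1`). -/
def fF1 (F : X → Set Y) (ybar : Y) : X × Y → EReal :=
  fun p => if p ∈ gph F then ((dist p.2 ybar : ℝ) : EReal) else ⊤

/-- The ρ-slope `|∇F|_ρ(x,y)` of a set-valued mapping at `(x,y) ∈ gph F`. -/
def FslopeR (F : X → Set Y) (ybar : Y) (ρ : ℝ) (p : X × Y) : EReal :=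
  limsup (fun u : X × Y => equot ((max (dist p.2 ybar - dist u.2 ybar) 0 : ℝ) : EReal) (drho ρ u p))
    (𝓝[gph F \ {p}] p)

/-- The nonlocal (q,ρ)-slope `|∇F|◇_{q,ρ}(x,y)` of a set-valued mapping. -/
def FnslopeQ (F : X → Set Y) (ybar : Y) (qq ρ : ℝ) (p : X × Y) : EReal :=
  ⨆ (u : X × Y) (_ : u ∈ gph F ∧ u ≠ p),
    equot ((max (dist p.2 ybar ^ qq - dist u.2 ybar ^ qq) 0 : ℝ) : EReal) (drho ρ u p)

/-- The uniform strict q-slope `\overline{|∇F|}^◇_q(xbar,ybar)`. -/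
def ussFq (F : X → Set Y) (xbar : X) (ybar : Y) (qq : ℝ) : EReal :=
  ⨆ (ρ : ℝ) (_ : 0 < ρ),
    ⨅ (p : X × Y)
      (_ : p ∈ gph F ∧ dist p.1 xbar < ρ ∧ dist p.2 ybar < ρ ∧ p.1 ∉ Finv F ybar),
      FnslopeQ F ybar qq ρ p

/-- The strict q-slope `\overline{|∇F|}_q(xbar,ybar)`. -/
def sosFq (F : X → Set Y) (xbar : X) (ybar : Y) (qq : ℝ) : EReal :=
  (qq : EReal) *
    ⨆ (ρ : ℝ) (_ : 0 < ρ),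
      ⨅ (p : X × Y)
        (_ : p ∈ gph F ∧ dist p.1 xbar < ρ ∧ dist p.2 ybar < ρ ∧ p.1 ∉ Finv F ybar),
        ((dist p.2 ybar ^ (qq - 1) : ℝ) : EReal) * FslopeR F ybar ρ p

/-- The modified strict q-slope `\overline{|∇F|}^{+}_q(xbar,ybar)`. -/
def msosFq (F : X → Set Y) (xbar : X) (ybar : Y) (qq : ℝ) : EReal :=
  ⨆ (ρ : ℝ) (_ : 0 < ρ),
    ⨅ (p : X × Y)
      (_ : p ∈ gph F ∧ dist p.1 xbar < ρ ∧ dist p.2 ybar < ρ ∧ p.1 ∉ Finv F ybar),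
      max (((qq * dist p.2 ybar ^ (qq - 1) : ℝ) : EReal) * FslopeR F ybar ρ p)
        (equot ((dist p.2 ybar ^ qq : ℝ) : EReal) (dist p.1 xbar))

/-- The Hölder subregularity modulus of order `q`:
`liminf_{x→xbar, x∉F⁻¹(ybar)} (d(ybar,F(x)))^q / d(x,F⁻¹(ybar))`
(with `d(ybar,∅) = +∞`). -/
def srq (F : X → Set Y) (xbar : X) (ybar : Y) (qq : ℝ) : EReal :=
  liminf
    (fun x : X =>
      equot (if F x = ∅ then ⊤ else ((infDist ybar (F x) ^ qq : ℝ) : EReal))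
        (infDist x (Finv F ybar)))
    (𝓝[(Finv F ybar)ᶜ] xbar)

end MetricDefs

section NormedDefs

variable {X Y : Type*} [NormedAddCommGroup X] [NormedSpace ℝ X]
  [NormedAddCommGroup Y] [NormedSpace ℝ Y]

/-- The Fréchet subdifferential of `f : X × Y → ℝ∪{+∞}` at `p`, as a set of pairs of
continuous linear functionals (empty when `f p = ⊤`). -/
def fsubdiff (f : X × Y → EReal) (p : X × Y) : Set ((X →L[ℝ] ℝ) × (Y →L[ℝ] ℝ)) :=
  {φ | f p ≠ ⊤ ∧ 0 ≤ liminf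
      (fun q : X × Y =>
        equot (f q - f p - ((φ.1 (q.1 - p.1) + φ.2 (q.2 - p.2) : ℝ) : EReal)) (dist q p))
      (𝓝[≠] p)}

/-- The subdifferential ρ-slope `|∂f|_ρ(x,y)`. -/
def sdslope (f : X × Y → EReal) (ρ : ℝ) (p : X × Y) : EReal :=
  ⨅ (φ : (X →L[ℝ] ℝ) × (Y →L[ℝ] ℝ)) (_ : φ ∈ fsubdiff f p ∧ ‖φ.2‖ < ρ), (‖φ.1‖ : EReal)

/-- The strict outer subdifferential slope `\overline{|∂f|}^{>}(xbar,ybar)`. -/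
def ssds (f : X × Y → EReal) (xbar : X) (ybar : Y) : EReal :=
  ⨆ (ρ : ℝ) (_ : 0 < ρ),
    ⨅ (p : X × Y) (_ : dist p.1 xbar < ρ ∧ 0 < f p ∧ f p < (ρ : EReal)), sdslope f ρ p

/-- The modified strict outer subdifferential slope `\overline{|∂f|}^{>+}(xbar,ybar)`. -/
def mssds (f : X × Y → EReal) (xbar : X) (ybar : Y) : EReal :=
  ⨆ (ρ : ℝ) (_ : 0 < ρ),
    ⨅ (p : X × Y) (_ : dist p.1 xbar < ρ ∧ 0 < f p ∧ f p < (ρ : EReal)),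
      max (sdslope f ρ p) (equot (f p) (dist p.1 xbar))

/-- `f` is convex on the set `U` (with extended-real values). -/
def convexOnE (U : Set (X × Y)) (f : X × Y → EReal) : Prop :=
  Convex ℝ U ∧ ∀ p ∈ U, ∀ q ∈ U, ∀ t : ℝ, 0 ≤ t → t ≤ 1 →
    f (t • p + (1 - t) • q) ≤ (t : EReal) * f p + ((1 - t : ℝ) : EReal) * f q

/-- The Fréchet normal cone to `Ω ⊂ X × Y` at `p ∈ Ω`. -/
def ncone (Ω : Set (X × Y)) (p : X × Y) : Set ((X →L[ℝ] ℝ) × (Y →L[ℝ] ℝ)) :=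
  {φ | limsup
      (fun q : X × Y =>
        equot (((φ.1 (q.1 - p.1) + φ.2 (q.2 - p.2) : ℝ)) : EReal) (dist q p))
      (𝓝[Ω \ {p}] p) ≤ 0}

/-- The Fréchet coderivative `D*F(x,y)(y*)`. -/
def coderiv (F : X → Set Y) (p : X × Y) (ys : Y →L[ℝ] ℝ) : Set (X →L[ℝ] ℝ) :=
  {xs | (xs, -ys) ∈ ncone (gph F) p}

/-- The (normalized) duality mapping `J(y) = {y* : ‖y*‖ = 1, ⟨y*,y⟩ = ‖y‖}`. -/
def Jdual (y : Y) : Set (Y →L[ℝ] ℝ) := {ys | ‖ys‖ = 1 ∧ ys y = ‖y‖}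

/-- The subdifferential ρ-slope of `F` at `(x,y) ∈ gph F`:
`inf{‖x*‖ : x* ∈ D*F(x,y)(J(y-ybar) + ρ𝔹*)}`. -/
def FsdSlope (F : X → Set Y) (ybar : Y) (ρ : ℝ) (p : X × Y) : EReal :=
  ⨅ (xs : X →L[ℝ] ℝ)
    (_ : ∃ ws : Y →L[ℝ] ℝ, (∃ ys ∈ Jdual (p.2 - ybar), ‖ws - ys‖ ≤ ρ) ∧ xs ∈ coderiv F p ws),
    (‖xs‖ : EReal)

/-- `ξ_q(y) = ‖y - ybar‖^{1-q}/q`. -/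
def xiq (qq : ℝ) (ybar y : Y) : ℝ := ‖y - ybar‖ ^ (1 - qq) / qq

/-- The strict subdifferential q-slope `\overline{|∂F|}_q(xbar,ybar)`. -/
def ssdFq (F : X → Set Y) (xbar : X) (ybar : Y) (qq : ℝ) : EReal :=
  (qq : EReal) *
    ⨆ (ρ : ℝ) (_ : 0 < ρ),
      ⨅ (p : X × Y)
        (_ : p ∈ gph F ∧ ‖p.1 - xbar‖ < ρ ∧ ‖p.2 - ybar‖ < ρ ∧ p.1 ∉ Finv F ybar),
        ((‖p.2 - ybar‖ ^ (qq - 1) : ℝ) : EReal) * FsdSlope F ybar (xiq qq ybar p.2 * ρ) p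

/-- The modified strict subdifferential q-slope `\overline{|∂F|}^{+}_q(xbar,ybar)`. -/
def msdFq (F : X → Set Y) (xbar : X) (ybar : Y) (qq : ℝ) : EReal :=
  ⨆ (ρ : ℝ) (_ : 0 < ρ),
    ⨅ (p : X × Y)
      (_ : p ∈ gph F ∧ ‖p.1 - xbar‖ < ρ ∧ ‖p.2 - ybar‖ < ρ ∧ p.1 ∉ Finv F ybar),
      max (((qq * ‖p.2 - ybar‖ ^ (qq - 1) : ℝ) : EReal) * FsdSlope F ybar (xiq qq ybar p.2 * ρ) p)
        (equot ((‖p.2 - ybar‖ ^ qq : ℝ) : EReal) ‖p.1 - xbar‖)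

/-- The normalized ε-enlargement `J^q_ε(y)` of the q-duality mapping
`J^q(y) = q‖y‖^{q-1} J(y)`. -/
def JqEps (qq ε : ℝ) (y : Y) : Set (Y →L[ℝ] ℝ) :=
  {ws | ∃ us ∈ Jdual y, ∃ vs : Y →L[ℝ] ℝ, ‖vs‖ ≤ 1 ∧
    (qq * ‖y‖ ^ (qq - 1)) • us + ε • vs ≠ 0 ∧
    ws = ‖(qq * ‖y‖ ^ (qq - 1)) • us + ε • vs‖⁻¹ • ((qq * ‖y‖ ^ (qq - 1)) • us + ε • vs)}

/-- The constant `β` of Li and Mordukhovich. -/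
def betaLM (F : X → Set Y) (xbar : X) (ybar : Y) (qq : ℝ) : EReal :=
  ⨆ (ε : ℝ) (_ : 0 < ε),
    ⨅ (p : X × Y) (xs : X →L[ℝ] ℝ)
      (_ : p ∈ gph F ∧ p.1 ∉ Finv F ybar ∧ ‖p.1 - xbar‖ < ε ∧
           ‖p.2 - ybar‖ < min ε (‖p.1 - xbar‖ ^ (1 / 2 : ℝ)) ∧
           ∃ ws ∈ JqEps qq ε (p.2 - ybar), xs ∈ coderiv F p ws),
      ((qq * ‖xs‖ * ‖p.2 - ybar‖ ^ (qq - 1) : ℝ) : EReal)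

end NormedDefs

end HolderPaper

namespace HolderPaper


section AuxLemmas

lemma equot_nonneg {a : EReal} (ha : 0 ≤ a) {d : ℝ} (hd : 0 ≤ d) : 0 ≤ equot a d := by
  unfold equot
  split
  · exact le_top
  · exact mul_nonneg ha (by exact_mod_cast inv_nonneg.2 hd)

lemma le_equot {γ d : ℝ} {a : EReal} (hd : 0 ≤ d) (h : ((γ * d : ℝ) : EReal) ≤ a) :
    (γ : EReal) ≤ equot a d := by
  unfold equot
  split
  · exact le_top
  · rename_i hd0
    have hdpos : 0 < d := lt_of_le_of_ne hd (Ne.symm hd0)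
    rw [EReal.coe_inv]
    change (γ : EReal) ≤ a / (d : EReal)
    rw [EReal.le_div_iff_mul_le (by exact_mod_cast hdpos) (by simp)]
    calc (γ : EReal) * (d : EReal) = ((γ * d : ℝ) : EReal) := by rw [EReal.coe_mul]
    _ ≤ a := h

lemma equot_le {γ d : ℝ} {a : EReal} (hd : 0 < d) (h : a ≤ ((γ * d : ℝ) : EReal)) :
    equot a d ≤ (γ : EReal) := by
  unfold equot
  rw [if_neg hd.ne']
  rw [EReal.coe_inv]
  change a / (d : EReal) ≤ (γ : EReal)
  rw [EReal.div_le_iff_le_mul (by exact_mod_cast hd) (by simp)]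
  calc a ≤ ((γ * d : ℝ) : EReal) := h
  _ = (d : EReal) * (γ : EReal) := by rw [← EReal.coe_mul, mul_comm]

section MetricAux
variable {X Y : Type*} [MetricSpace X] [MetricSpace Y]

lemma drho_nonneg {ρ : ℝ} (p q : X × Y) : 0 ≤ drho ρ p q :=
  le_trans dist_nonneg (le_max_left _ _)

lemma drho_self {ρ : ℝ} (p : X × Y) : drho ρ p p = 0 := by
  simp [drho]

lemma drho_comm (ρ : ℝ) (p q : X × Y) : drho ρ p q = drho ρ q p := by
  unfold drho; rw [dist_comm, dist_comm p.2]

lemma drho_pos {ρ : ℝ} (hρ : 0 < ρ) {p q : X × Y} (h : p ≠ q) : 0 < drho ρ p q := by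
  rcases eq_or_ne p.1 q.1 with h1 | h1
  · have h2 : p.2 ≠ q.2 := fun h2 => h (Prod.ext h1 h2)
    exact lt_of_lt_of_le (mul_pos hρ (dist_pos.2 h2)) (le_max_right _ _)
  · exact lt_of_lt_of_le (dist_pos.2 h1) (le_max_left _ _)

lemma drho_triangle {ρ : ℝ} (hρ : 0 ≤ ρ) (p q r : X × Y) :
    drho ρ p r ≤ drho ρ p q + drho ρ q r := by
  apply max_le
  · exact le_trans (dist_triangle _ _ _)
      (add_le_add (le_max_left _ _) (le_max_left _ _))
  · calc ρ * dist p.2 r.2 ≤ ρ * (dist p.2 q.2 + dist q.2 r.2) :=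
          mul_le_mul_of_nonneg_left (dist_triangle _ _ _) hρ
    _ = ρ * dist p.2 q.2 + ρ * dist q.2 r.2 := mul_add _ _ _
    _ ≤ _ := add_le_add (le_max_right _ _) (le_max_right _ _)

lemma dist_fst_le_drho {ρ : ℝ} (p q : X × Y) : dist p.1 q.1 ≤ drho ρ p q :=
  le_max_left _ _

lemma dist_le_drho {ρ : ℝ} (hρ : 0 < ρ) (p q : X × Y) :
    dist p q ≤ max 1 ρ⁻¹ * drho ρ p q := by
  rw [Prod.dist_eq]
  apply max_le
  · calc dist p.1 q.1 ≤ drho ρ p q := le_max_left _ _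
    _ = 1 * drho ρ p q := (one_mul _).symm
    _ ≤ max 1 ρ⁻¹ * drho ρ p q :=
        mul_le_mul_of_nonneg_right (le_max_left _ _) (drho_nonneg _ _)
  · calc dist p.2 q.2 = ρ⁻¹ * (ρ * dist p.2 q.2) := by
          field_simp
    _ ≤ ρ⁻¹ * drho ρ p q :=
        mul_le_mul_of_nonneg_left (le_max_right _ _) (inv_nonneg.2 hρ.le)
    _ ≤ max 1 ρ⁻¹ * drho ρ p q :=
        mul_le_mul_of_nonneg_right (le_max_right _ _) (drho_nonneg _ _)

lemma drho_le_dist {ρ : ℝ} (hρ : 0 < ρ) (p q : X × Y) :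
    drho ρ p q ≤ max 1 ρ * dist p q := by
  rw [Prod.dist_eq]
  apply max_le
  · calc dist p.1 q.1 = 1 * dist p.1 q.1 := (one_mul _).symm
    _ ≤ max 1 ρ * max (dist p.1 q.1) (dist p.2 q.2) :=
        mul_le_mul (le_max_left _ _) (le_max_left _ _) dist_nonneg
          (le_trans zero_le_one (le_max_left _ _))
  · exact mul_le_mul (le_max_right _ _) (le_max_right _ _) dist_nonneg
      (le_trans zero_le_one (le_max_left _ _))

end MetricAux

lemma EReal.le_of_forall_real_lt {a b : EReal} (h : ∀ γ : ℝ, (γ : EReal) < a → (γ : EReal) ≤ b) :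
    a ≤ b := by
  by_contra hc
  push_neg at hc
  obtain ⟨γ, hbγ, hγa⟩ := EReal.exists_between_coe_real hc
  exact absurd (h γ hγa) (not_le.2 hbγ)

end AuxLemmas


section Ekeland
variable {X Y : Type*} [MetricSpace X] [MetricSpace Y]

lemma ekeland [CompleteSpace X] [CompleteSpace Y]
    (g : X × Y → EReal) (W : Set (X × Y)) (hWc : IsClosed W)
    (hlsc : LowerSemicontinuousOn g W) (hg0 : ∀ p, 0 ≤ g p)
    {ρ α : ℝ} (hρ : 0 < ρ) (hα : 0 < α) {p₀ : X × Y} (hp₀ : p₀ ∈ W)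
    (htop : g p₀ ≠ ⊤) :
    ∃ q ∈ W, (g q + ((α * drho ρ p₀ q : ℝ) : EReal) ≤ g p₀) ∧
      ∀ u ∈ W, g q ≤ g u + ((α * drho ρ q u : ℝ) : EReal) := by
  classical
  set D : (X × Y) → Set (X × Y) :=
    fun p => {u | u ∈ W ∧ g u + ((α * drho ρ p u : ℝ) : EReal) ≤ g p} with hD
  have hD_self : ∀ p ∈ W, p ∈ D p := by
    intro p hp
    refine ⟨hp, ?_⟩
    simp [drho_self]
  have hD_sub : ∀ p u, u ∈ D p → ∀ v, v ∈ D u → v ∈ D p := by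
    intro p u hu v hv
    refine ⟨hv.1, ?_⟩
    calc g v + ((α * drho ρ p v : ℝ) : EReal)
        ≤ g v + ((α * (drho ρ p u + drho ρ u v) : ℝ) : EReal) := by
          apply add_le_add_right
          exact_mod_cast mul_le_mul_of_nonneg_left (drho_triangle hρ.le p u v) hα.le
      _ = (g v + ((α * drho ρ u v : ℝ) : EReal)) + ((α * drho ρ p u : ℝ) : EReal) := by
          rw [mul_add, EReal.coe_add, add_comm ((α * drho ρ p u : ℝ) : EReal)
            ((α * drho ρ u v : ℝ) : EReal), ← add_assoc]
      _ ≤ g u + ((α * drho ρ p u : ℝ) : EReal) := add_le_add_left hv.2 _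
      _ ≤ g p := hu.2
  have hcoe_nonneg : ∀ p q : X × Y, (0 : EReal) ≤ ((α * drho ρ p q : ℝ) : EReal) := by
    intro p q
    exact_mod_cast mul_nonneg hα.le (drho_nonneg p q)
  have hmono : ∀ p u, u ∈ D p → g u ≤ g p := by
    intro p u hu
    exact le_trans (le_add_of_nonneg_right (hcoe_nonneg p u)) hu.2
  have hg_nebot : ∀ p, g p ≠ ⊥ := by
    intro p h
    have := hg0 p
    rw [h] at this
    exact absurd this (by simp)
  have hstep : ∀ (p : X × Y) (n : ℕ), p ∈ W → g p ≠ ⊤ →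
      ∃ u, u ∈ D p ∧ g u ≤ sInf (g '' D p) + (((2 : ℝ)⁻¹ ^ n : ℝ) : EReal) := by
    intro p n hpW hpt
    have hmem : g p ∈ g '' D p := ⟨p, hD_self p hpW, rfl⟩
    have hne_top : sInf (g '' D p) ≠ ⊤ := ne_top_of_le_ne_top hpt (sInf_le hmem)
    have hge0 : (0 : EReal) ≤ sInf (g '' D p) := by
      apply le_sInf
      rintro b ⟨u, _, rfl⟩
      exact hg0 u
    have hne_bot : sInf (g '' D p) ≠ ⊥ := fun h => by
      rw [h] at hge0; exact absurd hge0 (by simp)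
    obtain ⟨t, ht⟩ : ∃ t : ℝ, sInf (g '' D p) = (t : EReal) :=
      ⟨(sInf (g '' D p)).toReal, (EReal.coe_toReal hne_top hne_bot).symm⟩
    have hlt : sInf (g '' D p) < sInf (g '' D p) + (((2 : ℝ)⁻¹ ^ n : ℝ) : EReal) := by
      rw [ht, ← EReal.coe_add, EReal.coe_lt_coe_iff]
      have : (0:ℝ) < (2 : ℝ)⁻¹ ^ n := by positivity
      linarith
    obtain ⟨b, hbmem, hb⟩ := sInf_lt_iff.1 hlt
    obtain ⟨u, huD, rfl⟩ := hbmem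
    exact ⟨u, huD, hb.le⟩
  let nxt : ℕ → (X × Y) → (X × Y) := fun n p =>
    if h : p ∈ W ∧ g p ≠ ⊤ then (hstep p n h.1 h.2).choose else p
  let pseq : ℕ → X × Y := fun n => Nat.rec p₀ (fun k ih => nxt k ih) n
  have hpsS : ∀ n, pseq (n + 1) = nxt n (pseq n) := fun n => rfl
  have hinv : ∀ n, pseq n ∈ W ∧ g (pseq n) ≠ ⊤ := by
    intro n
    induction n with
    | zero => exact ⟨hp₀, htop⟩
    | succ k ih =>
      have heq : nxt k (pseq k) = (hstep (pseq k) k ih.1 ih.2).choose := dif_pos ih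
      rw [hpsS, heq]
      have hspec := (hstep (pseq k) k ih.1 ih.2).choose_spec
      exact ⟨hspec.1.1, ne_top_of_le_ne_top ih.2 (hmono _ _ hspec.1)⟩
  have hDstep : ∀ n, pseq (n + 1) ∈ D (pseq n) ∧
      g (pseq (n + 1)) ≤ sInf (g '' D (pseq n)) + (((2 : ℝ)⁻¹ ^ n : ℝ) : EReal) := by
    intro n
    have heq : nxt n (pseq n) = (hstep (pseq n) n (hinv n).1 (hinv n).2).choose :=
      dif_pos (hinv n)
    rw [hpsS, heq]
    exact (hstep (pseq n) n (hinv n).1 (hinv n).2).choose_spec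
  have hchain : ∀ n m, n ≤ m → pseq m ∈ D (pseq n) := by
    intro n m h
    induction h with
    | refl => exact hD_self _ (hinv n).1
    | step h ih => exact hD_sub _ _ ih _ (hDstep _).1
  set a : ℕ → ℝ := fun n => (g (pseq n)).toReal with ha
  have hfin : ∀ n, g (pseq n) = ((a n : ℝ) : EReal) :=
    fun n => (EReal.coe_toReal (hinv n).2 (hg_nebot _)).symm
  have ha0 : ∀ n, 0 ≤ a n := by
    intro n
    have h := hg0 (pseq n)
    rw [hfin n] at h
    exact_mod_cast h
  have hdec : ∀ n, a (n + 1) + α * drho ρ (pseq n) (pseq (n + 1)) ≤ a n := by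
    intro n
    have h := (hDstep n).1.2
    rw [hfin n, hfin (n + 1), ← EReal.coe_add, EReal.coe_le_coe_iff] at h
    exact h
  have hsum : Summable fun n => dist (pseq n) (pseq (n + 1)) := by
    apply summable_of_sum_range_le
      (c := (max 1 ρ⁻¹ * α⁻¹) * a 0)
      (fun n => dist_nonneg)
    intro n
    have hterm : ∀ k, dist (pseq k) (pseq (k + 1)) ≤
        (max 1 ρ⁻¹ * α⁻¹) * (a k - a (k + 1)) := by
      intro k
      calc dist (pseq k) (pseq (k + 1)) ≤ max 1 ρ⁻¹ * drho ρ (pseq k) (pseq (k + 1)) :=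
          dist_le_drho hρ _ _
        _ ≤ max 1 ρ⁻¹ * (α⁻¹ * (a k - a (k + 1))) := by
            apply mul_le_mul_of_nonneg_left _ (le_trans zero_le_one (le_max_left _ _))
            rw [le_inv_mul_iff₀ hα]
            linarith [hdec k]
        _ = (max 1 ρ⁻¹ * α⁻¹) * (a k - a (k + 1)) := by ring
    calc ∑ i ∈ Finset.range n, dist (pseq i) (pseq (i + 1))
        ≤ ∑ i ∈ Finset.range n, (max 1 ρ⁻¹ * α⁻¹) * (a i - a (i + 1)) :=
          Finset.sum_le_sum fun i _ => hterm i
      _ = (max 1 ρ⁻¹ * α⁻¹) * (a 0 - a n) := by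
          rw [← Finset.mul_sum, Finset.sum_range_sub']
      _ ≤ (max 1 ρ⁻¹ * α⁻¹) * a 0 := by
          apply mul_le_mul_of_nonneg_left _ (by positivity)
          linarith [ha0 n]
  obtain ⟨q, hq⟩ := cauchySeq_tendsto_of_complete (cauchySeq_of_summable_dist hsum)
  have hmemW : ∀ n, pseq n ∈ W := fun n => (hinv n).1
  have hqW : q ∈ W := hWc.mem_of_tendsto hq (Filter.Eventually.of_forall hmemW)
  have htw : Filter.Tendsto pseq Filter.atTop (𝓝[W] q) :=
    tendsto_nhdsWithin_iff.2 ⟨hq, Filter.Eventually.of_forall hmemW⟩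
  have hqD : ∀ n, q ∈ D (pseq n) := by
    intro n
    refine ⟨hqW, ?_⟩
    by_contra hcon
    push_neg at hcon
    set dbar := drho ρ (pseq n) q with hdbar
    have h1 : ((a n - α * dbar : ℝ) : EReal) < g q := by
      by_contra h2
      push_neg at h2
      have h3 : g q + ((α * dbar : ℝ) : EReal) ≤
          ((a n - α * dbar : ℝ) : EReal) + ((α * dbar : ℝ) : EReal) :=
        add_le_add_left h2 _
      rw [← EReal.coe_add] at h3
      have h4 : ((a n - α * dbar + α * dbar : ℝ) : EReal) = g (pseq n) := by
        rw [hfin n]; norm_num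
      rw [h4] at h3
      exact absurd h3 (not_le.2 hcon)
    obtain ⟨y', hy'1, hy'2⟩ := EReal.exists_between_coe_real h1
    have hev1 : ∀ᶠ k in Filter.atTop, (y' : EReal) < g (pseq k) :=
      htw.eventually (hlsc q hqW (y' : EReal) hy'2)
    have hcont : Continuous fun u : X × Y => drho ρ (pseq n) u := by
      apply Continuous.max
      · exact continuous_const.dist continuous_fst
      · exact continuous_const.mul (continuous_const.dist continuous_snd)
    have hev2 : Filter.Tendsto (fun k => a n - α * drho ρ (pseq n) (pseq k))
        Filter.atTop (𝓝 (a n - α * dbar)) := by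
      apply Filter.Tendsto.const_sub
      exact (((hcont.tendsto q).comp hq).const_mul α)
    have hy1R : a n - α * dbar < y' := by exact_mod_cast hy'1
    have hev3 : ∀ᶠ k in Filter.atTop, a n - α * drho ρ (pseq n) (pseq k) < y' :=
      hev2.eventually_lt_const hy1R
    obtain ⟨k, ⟨hk1, hk2⟩, hk3⟩ :=
      ((hev1.and hev3).and (Filter.eventually_ge_atTop n)).exists
    have hkD := (hchain n k hk3).2
    rw [hfin k, hfin n, ← EReal.coe_add, EReal.coe_le_coe_iff] at hkD
    have hy'k : y' < a k := by
      rw [hfin k, EReal.coe_lt_coe_iff] at hk1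
      exact hk1
    linarith
  have hmin : ∀ u ∈ W, g q ≤ g u + ((α * drho ρ q u : ℝ) : EReal) := by
    intro u huW
    by_contra hcon
    push_neg at hcon
    set du := drho ρ q u with hdu
    have hqfin : g q ≠ ⊤ := by
      have := hmono _ _ (hqD 0)
      exact ne_top_of_le_ne_top (hinv 0).2 this
    have hufin : g u ≠ ⊤ := by
      intro h
      rw [h] at hcon
      have : g q ≤ ⊤ + ((α * du : ℝ) : EReal) := le_top.trans (le_add_of_nonneg_right
        (hcoe_nonneg q u))
      exact absurd hcon (not_lt.2 this)
    have hune : u ≠ q := by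
      rintro rfl
      rw [hdu] at hcon
      rw [drho_self, mul_zero] at hcon
      simp at hcon
    have hdupos : 0 < du := drho_pos hρ (fun h => hune h.symm)
    have huD : ∀ n, u ∈ D (pseq n) := by
      intro n
      refine ⟨huW, ?_⟩
      calc g u + ((α * drho ρ (pseq n) u : ℝ) : EReal)
          ≤ g u + ((α * (drho ρ (pseq n) q + du) : ℝ) : EReal) := by
            apply add_le_add_right
            exact_mod_cast mul_le_mul_of_nonneg_left (drho_triangle hρ.le _ q u) hα.le
        _ = (g u + ((α * du : ℝ) : EReal)) + ((α * drho ρ (pseq n) q : ℝ) : EReal) := by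
            rw [mul_add, EReal.coe_add, add_comm ((α * drho ρ (pseq n) q : ℝ) : EReal)
              ((α * du : ℝ) : EReal), ← add_assoc]
        _ ≤ g q + ((α * drho ρ (pseq n) q : ℝ) : EReal) := add_le_add_left hcon.le _
        _ ≤ g (pseq n) := (hqD n).2
    have hq_le : ∀ n, g q ≤ g u + (((2 : ℝ)⁻¹ ^ n : ℝ) : EReal) := by
      intro n
      calc g q ≤ g (pseq (n + 1)) := hmono _ _ (hqD (n + 1))
        _ ≤ sInf (g '' D (pseq n)) + (((2 : ℝ)⁻¹ ^ n : ℝ) : EReal) := (hDstep n).2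
        _ ≤ g u + (((2 : ℝ)⁻¹ ^ n : ℝ) : EReal) :=
            add_le_add_left (sInf_le (Set.mem_image_of_mem g (huD n))) _
    obtain ⟨bq, hbq⟩ : ∃ t : ℝ, g q = (t : EReal) :=
      ⟨(g q).toReal, (EReal.coe_toReal hqfin (hg_nebot _)).symm⟩
    obtain ⟨bu, hbu⟩ : ∃ t : ℝ, g u = (t : EReal) :=
      ⟨(g u).toReal, (EReal.coe_toReal hufin (hg_nebot _)).symm⟩
    obtain ⟨n, hn⟩ := exists_pow_lt_of_lt_one (mul_pos hα hdupos)
      (by norm_num : (2 : ℝ)⁻¹ < 1)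
    have h5 := hq_le n
    rw [hbq, hbu, ← EReal.coe_add, EReal.coe_le_coe_iff] at h5
    rw [hbq, hbu, ← EReal.coe_add, EReal.coe_lt_coe_iff] at hcon
    linarith
  exact ⟨q, hqW, (hqD 0).2, hmin⟩

end Ekeland

set_option maxHeartbeats 2000000 in
/-- if `X`, `Y` are complete and `f₊` is lower semicontinuous near `(xbar,ybar)`,
then under (P1)-(P2), `Er f(xbar,ybar) = \overline{|∇f|}^◇(xbar,ybar)`. -/
theorem statement9 {X Y : Type*} [MetricSpace X] [CompleteSpace X] [MetricSpace Y] [CompleteSpace Y]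
    (f : X × Y → EReal) (xbar : X) (ybar : Y)
    (hbot : ∀ p, f p ≠ ⊥) (h0 : f (xbar, ybar) = 0)
    (hP1 : P1 f ybar) (hP2 : P2 f ybar)
    (hlsc : ∃ U ∈ 𝓝 (xbar, ybar), LowerSemicontinuousOn (fplus f) U) :
    erMod f xbar ybar = uss f xbar ybar := by
  set S := Sf f ybar with hS
  have hxbarS : xbar ∈ S := by
    show f (xbar, ybar) ≤ 0
    rw [h0]
  have hSne : S.Nonempty := ⟨xbar, hxbarS⟩
  -- Extract constants from (P2)
  obtain ⟨c, hcpos, hcliminf⟩ := EReal.exists_between_coe_real hP2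
  have hc0 : (0 : ℝ) < c := by exact_mod_cast hcpos
  have hevP2 := Filter.eventually_lt_of_lt_liminf hcliminf
  rw [Filter.eventually_comap] at hevP2
  obtain ⟨u, hu, husub⟩ := (mem_nhdsGT_iff_exists_Ioo_subset'
      (show (0 : EReal) < ⊤ by simp)).1 hevP2
  obtain ⟨σ, hσ0, hσu⟩ := EReal.exists_between_coe_real hu
  have hσpos : (0 : ℝ) < σ := by exact_mod_cast hσ0
  have hP2' : ∀ p : X × Y, 0 < f p → f p < (σ : EReal) →
      (c : EReal) ≤ equot (f p) (dist p.2 ybar) := by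
    intro p hp0 hpσ
    exact (husub ⟨hp0, hpσ.trans hσu⟩ p rfl).le
  -- nonnegativity of the two quantities
  have h_er_nonneg : (0 : EReal) ≤ erMod f xbar ybar := by
    unfold erMod
    rw [← hS]
    refine Filter.le_liminf_of_le (by isBoundedDefault) ?_
    rw [Filter.eventually_inf_principal]
    apply Filter.Eventually.of_forall
    intro p hp
    exact equot_nonneg (le_of_lt hp) infDist_nonneg
  have h_uss_nonneg : (0 : EReal) ≤ uss f xbar ybar := by
    unfold uss
    refine le_trans ?_ (le_iSup₂ (f := fun (ρ : ℝ) (_ : 0 < ρ) =>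
      ⨅ (p : X × Y) (_ : dist p.1 xbar < ρ ∧ 0 < f p ∧ f p < (ρ : EReal)),
        nslope f ρ p) 1 one_pos)
    refine le_iInf fun p => le_iInf fun hp => ?_
    unfold nslope
    split
    · exact le_top
    · have hpne : (xbar, ybar) ≠ p := by
        intro h
        rw [← h, h0] at hp
        exact absurd hp.2.1 (lt_irrefl _)
      refine le_trans ?_ (le_iSup₂ (xbar, ybar) hpne)
      exact equot_nonneg (le_max_right _ _) (drho_nonneg _ _)
  -- Part 1 : erMod ≤ uss
  have part1 : erMod f xbar ybar ≤ uss f xbar ybar := by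
    apply EReal.le_of_forall_real_lt
    intro γ' hγ'
    rcases le_or_gt (γ' : EReal) 0 with hle | hposE
    · exact hle.trans h_uss_nonneg
    have hγ'0 : (0 : ℝ) < γ' := by exact_mod_cast hposE
    obtain ⟨γ, hγ1, hγ2⟩ := EReal.exists_between_coe_real hγ'
    have hγγ' : γ' < γ := by exact_mod_cast hγ1
    have hγ0 : (0 : ℝ) < γ := lt_trans hγ'0 hγγ'
    have hev := Filter.eventually_lt_of_lt_liminf hγ2
    rw [Filter.eventually_inf_principal] at hev
    obtain ⟨t, ht, htsub⟩ := Filter.mem_comap.1 hev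
    obtain ⟨δ, hδ0, hδsub⟩ := Metric.mem_nhds_iff.1 ht
    set ρ := min δ (min σ (c / γ')) with hρdef
    have hρ0 : 0 < ρ := lt_min hδ0 (lt_min hσpos (by positivity))
    have hρδ : ρ ≤ δ := min_le_left _ _
    have hρσ : ρ ≤ σ := (min_le_right _ _).trans (min_le_left _ _)
    have hρc : ρ ≤ c / γ' := (min_le_right _ _).trans (min_le_right _ _)
    unfold uss
    refine le_trans ?_ (le_iSup₂ (f := fun (ρ : ℝ) (_ : 0 < ρ) =>
      ⨅ (p : X × Y) (_ : dist p.1 xbar < ρ ∧ 0 < f p ∧ f p < (ρ : EReal)),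
        nslope f ρ p) ρ hρ0)
    refine le_iInf fun p => le_iInf fun hp => ?_
    obtain ⟨hp1, hp2, hp3⟩ := hp
    have hfp_top : f p ≠ ⊤ := ne_top_of_lt hp3
    have hfp_bot : f p ≠ ⊥ := by
      intro h
      rw [h] at hp2
      exact absurd hp2 (by simp)
    obtain ⟨F, hF⟩ : ∃ F : ℝ, f p = (F : EReal) :=
      ⟨(f p).toReal, (EReal.coe_toReal hfp_top hfp_bot).symm⟩
    have hF0 : 0 < F := by
      have := hp2; rw [hF] at this; exact_mod_cast this
    -- liminf bound at p
    have hq : (γ : EReal) < equot (f p) (infDist p.1 S) := by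
      apply htsub (show p.1 ∈ t from hδsub (Metric.mem_ball.2 (lt_of_lt_of_le hp1 hρδ)))
      exact hp2
    set dS := infDist p.1 S with hdSdef
    have hdSnn : 0 ≤ dS := infDist_nonneg
    have hdS : dS ≤ F / γ := by
      rcases eq_or_lt_of_le hdSnn with h | h
      · rw [← h]; positivity
      · unfold equot at hq
        rw [if_neg h.ne', hF, ← EReal.coe_mul, EReal.coe_lt_coe_iff,
          ← div_eq_mul_inv] at hq
        have h2 : γ * dS < F := (lt_div_iff₀ h).1 hq
        rw [le_div_iff₀ hγ0]
        nlinarith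
    have hdy : ρ * dist p.2 ybar ≤ F / γ' := by
      rcases eq_or_ne p.2 ybar with h | h
      · rw [h, dist_self, mul_zero]; positivity
      · have hd2 : 0 < dist p.2 ybar := dist_pos.2 h
        have hfσ : f p < (σ : EReal) :=
          lt_of_lt_of_le hp3 (by exact_mod_cast hρσ)
        have hc2 := hP2' p hp2 hfσ
        unfold equot at hc2
        rw [if_neg hd2.ne', hF, ← EReal.coe_mul, EReal.coe_le_coe_iff,
          ← div_eq_mul_inv] at hc2
        have hdy2 : dist p.2 ybar ≤ F / c := by
          rw [le_div_iff₀ hc0]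
          calc dist p.2 ybar * c ≤ dist p.2 ybar * (F / dist p.2 ybar) :=
            mul_le_mul_of_nonneg_left hc2 hd2.le
          _ = F := by field_simp
        calc ρ * dist p.2 ybar ≤ (c / γ') * (F / c) :=
            mul_le_mul hρc hdy2 dist_nonneg (by positivity)
        _ = F / γ' := by field_simp
    have hε : F / γ < F / γ' := div_lt_div_of_pos_left hF0 hγ'0 hγγ'
    obtain ⟨w, hwS, hw⟩ := (Metric.infDist_lt_iff hSne).1
      (show dS < dS + (F / γ' - F / γ) by linarith)
    set q : X × Y := (w, ybar) with hqdef
    have hqp : q ≠ p := by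
      intro h
      have : f p ≤ 0 := by rw [← h]; exact hwS
      exact absurd (lt_of_lt_of_le hp2 this) (lt_irrefl _)
    have hdrho : drho ρ p q ≤ F / γ' := by
      apply max_le
      · have : dist p.1 w < dS + (F / γ' - F / γ) := hw
        have h2 : dS + (F / γ' - F / γ) ≤ F / γ' := by linarith
        exact (lt_of_lt_of_le this h2).le
      · exact hdy
    have hfplusq : fplus f q = 0 := by
      unfold fplus
      exact max_eq_right hwS
    have hterm : (γ' : EReal) ≤ equot (max (f p - fplus f q) 0) (drho ρ p q) := by
      rw [hfplusq]
      have h1 : f p - 0 = f p := by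
        rw [sub_eq_add_neg, neg_zero, add_zero]
      rw [h1, max_eq_left hp2.le]
      apply le_equot (drho_nonneg _ _)
      rw [hF, EReal.coe_le_coe_iff]
      calc γ' * drho ρ p q ≤ γ' * (F / γ') := mul_le_mul_of_nonneg_left hdrho hγ'0.le
      _ = F := by field_simp
    unfold nslope
    rw [if_neg hfp_top]
    exact le_trans hterm (le_iSup₂ (f := fun (q : X × Y) (_ : q ≠ p) =>
      equot (max (f p - fplus f q) 0) (drho ρ p q)) q hqp)
  -- Part 2 : uss ≤ erMod
  have part2 : uss f xbar ybar ≤ erMod f xbar ybar := by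
    apply EReal.le_of_forall_real_lt
    intro γ hγuss
    rcases le_or_gt (γ : EReal) 0 with hle | hposE
    · exact hle.trans h_er_nonneg
    have hγ0 : (0 : ℝ) < γ := by exact_mod_cast hposE
    unfold uss at hγuss
    obtain ⟨ρ, hργ⟩ := lt_iSup_iff.1 hγuss
    obtain ⟨hρ0, hinfγ⟩ := lt_iSup_iff.1 hργ
    have hslope : ∀ p : X × Y, dist p.1 xbar < ρ → 0 < f p → f p < (ρ : EReal) →
        (γ : EReal) < nslope f ρ p :=
      fun p h1 h2 h3 => lt_of_lt_of_le hinfγ (iInf₂_le p ⟨h1, h2, h3⟩)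
    obtain ⟨U, hU, hlscU⟩ := hlsc
    obtain ⟨r0, hr00, hball⟩ := Metric.mem_nhds_iff.1 hU
    set r := r0 / 2 with hrdef
    have hr0 : 0 < r := by positivity
    set W := Metric.closedBall (xbar, ybar) r with hWdef
    have hWU : W ⊆ U := by
      intro q hq
      apply hball
      have h1 : dist q (xbar, ybar) ≤ r := hq
      have h2 : r < r0 := by rw [hrdef]; linarith
      exact lt_of_le_of_lt h1 h2
    have hWc : IsClosed W := Metric.isClosed_closedBall
    have hlscW : LowerSemicontinuousOn (fplus f) W := hlscU.mono hWU
    set δ := min (min (r / 4) (ρ * r / 4))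
      (min (min (ρ / 2) (ρ / γ)) (min (σ / γ) (r * c / (4 * γ)))) with hδdef
    have hδ0 : 0 < δ :=
      lt_min (lt_min (by positivity) (by positivity))
        (lt_min (lt_min (by positivity) (by positivity))
          (lt_min (by positivity) (by positivity)))
    have hδ1 : δ ≤ r / 4 := (min_le_left _ _).trans (min_le_left _ _)
    have hδ2 : δ ≤ ρ * r / 4 := (min_le_left _ _).trans (min_le_right _ _)
    have hδ3 : δ ≤ ρ / 2 := (min_le_right _ _).trans ((min_le_left _ _).trans (min_le_left _ _))
    have hδ4 : δ ≤ ρ / γ := (min_le_right _ _).trans ((min_le_left _ _).trans (min_le_right _ _))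
    have hδ5 : δ ≤ σ / γ := (min_le_right _ _).trans ((min_le_right _ _).trans (min_le_left _ _))
    have hδ6 : δ ≤ r * c / (4 * γ) :=
      (min_le_right _ _).trans ((min_le_right _ _).trans (min_le_right _ _))
    have key : ∀ p₀ : X × Y, dist p₀.1 xbar < δ → 0 < f p₀ →
        (γ : EReal) ≤ equot (f p₀) (infDist p₀.1 S) := by
      intro p₀ hpx hpf
      by_contra hcon
      push_neg at hcon
      set dS₀ := infDist p₀.1 S with hdS₀def
      have hdS₀nn : 0 ≤ dS₀ := infDist_nonneg
      have hdS₀0 : dS₀ ≠ 0 := by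
        intro h
        unfold equot at hcon
        rw [if_pos h] at hcon
        exact absurd hcon not_top_lt
      have hdS₀pos : 0 < dS₀ := lt_of_le_of_ne hdS₀nn (Ne.symm hdS₀0)
      have hfp_top : f p₀ ≠ ⊤ := by
        intro h
        unfold equot at hcon
        rw [if_neg hdS₀0, h, EReal.top_mul_of_pos
          (by exact_mod_cast inv_pos.2 hdS₀pos : (0 : EReal) < ((dS₀⁻¹ : ℝ) : EReal))] at hcon
        exact absurd hcon not_top_lt
      have hfp_bot : f p₀ ≠ ⊥ := by
        intro h
        rw [h] at hpf
        exact absurd hpf (by simp)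
      obtain ⟨F₀, hF₀⟩ : ∃ F₀ : ℝ, f p₀ = (F₀ : EReal) :=
        ⟨(f p₀).toReal, (EReal.coe_toReal hfp_top hfp_bot).symm⟩
      have hF₀pos : 0 < F₀ := by
        have := hpf; rw [hF₀] at this; exact_mod_cast this
      have hFds : F₀ < γ * dS₀ := by
        unfold equot at hcon
        rw [if_neg hdS₀0, hF₀, ← EReal.coe_mul, EReal.coe_lt_coe_iff,
          ← div_eq_mul_inv] at hcon
        exact (div_lt_iff₀ hdS₀pos).1 hcon
      have hdSd : dS₀ ≤ dist p₀.1 xbar := infDist_le_dist_of_mem hxbarS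
      have hF₀δ : F₀ < γ * δ :=
        lt_of_lt_of_le hFds (mul_le_mul_of_nonneg_left (hdSd.trans hpx.le) hγ0.le)
      have hγδσ : γ * δ ≤ σ := by
        calc γ * δ ≤ γ * (σ / γ) := mul_le_mul_of_nonneg_left hδ5 hγ0.le
        _ = σ := by field_simp
      have hγδρ : γ * δ ≤ ρ := by
        calc γ * δ ≤ γ * (ρ / γ) := mul_le_mul_of_nonneg_left hδ4 hγ0.le
        _ = ρ := by field_simp
      have hγδrc : γ * δ ≤ r * c / 4 := by
        calc γ * δ ≤ γ * (r * c / (4 * γ)) := mul_le_mul_of_nonneg_left hδ6 hγ0.le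
        _ = r * c / 4 := by field_simp
      have hy₀ : dist p₀.2 ybar ≤ F₀ / c := by
        rcases eq_or_ne p₀.2 ybar with h | h
        · rw [h, dist_self]; positivity
        · have hd2 : 0 < dist p₀.2 ybar := dist_pos.2 h
          have hfσ : f p₀ < (σ : EReal) := by
            rw [hF₀]
            exact_mod_cast lt_of_lt_of_le hF₀δ hγδσ
          have hc2 := hP2' p₀ hpf hfσ
          unfold equot at hc2
          rw [if_neg hd2.ne', hF₀, ← EReal.coe_mul, EReal.coe_le_coe_iff,
            ← div_eq_mul_inv] at hc2
          rw [le_div_iff₀ hc0]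
          calc dist p₀.2 ybar * c ≤ dist p₀.2 ybar * (F₀ / dist p₀.2 ybar) :=
            mul_le_mul_of_nonneg_left hc2 hd2.le
          _ = F₀ := by field_simp
      have hy₀r : dist p₀.2 ybar ≤ r / 4 := by
        have h3 : F₀ / c ≤ r / 4 := by
          rw [div_le_iff₀ hc0]
          calc F₀ ≤ r * c / 4 := by linarith
          _ = r / 4 * c := by ring
        linarith [hy₀]
      have hp₀W : p₀ ∈ W := by
        rw [hWdef, Metric.mem_closedBall, Prod.dist_eq]
        apply max_le
        · have : dist p₀.1 xbar < r / 4 := lt_of_lt_of_le hpx hδ1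
          linarith
        · linarith [hy₀r]
      have hgp₀ : fplus f p₀ = ((F₀ : ℝ) : EReal) := by
        unfold fplus
        rw [hF₀]
        exact max_eq_left (by exact_mod_cast hF₀pos.le)
      obtain ⟨qb, hqbW, hqb1, hqb2⟩ := ekeland (fplus f) W hWc hlscW
        (fun p => le_max_right _ _) hρ0 hγ0 hp₀W (by rw [hgp₀]; exact EReal.coe_ne_top _)
      have hdrho0 : γ * drho ρ p₀ qb ≤ F₀ := by
        have h1 : ((γ * drho ρ p₀ qb : ℝ) : EReal) ≤ ((F₀ : ℝ) : EReal) := by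
          calc ((γ * drho ρ p₀ qb : ℝ) : EReal)
              ≤ fplus f qb + ((γ * drho ρ p₀ qb : ℝ) : EReal) :=
                le_add_of_nonneg_left (le_max_right _ _)
          _ ≤ fplus f p₀ := hqb1
          _ = ((F₀ : ℝ) : EReal) := hgp₀
        exact_mod_cast h1
      have hdrhole : drho ρ p₀ qb ≤ F₀ / γ := by
        rw [le_div_iff₀ hγ0]
        linarith [hdrho0]
      have hdxq : dist p₀.1 qb.1 ≤ F₀ / γ :=
        le_trans (dist_fst_le_drho _ _) hdrhole
      have hF₀γδ : F₀ / γ < δ := by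
        rw [div_lt_iff₀ hγ0]
        linarith [hF₀δ]
      rcases le_or_gt (f qb) 0 with hq0 | hq0
      · -- f(qb) ≤ 0 : contradiction with F₀ < γ dS₀
        have hy : qb.2 = ybar := by
          by_contra hne
          exact absurd (hP1 qb hne) (not_lt.2 hq0)
        have hqS : qb.1 ∈ S := by
          show f (qb.1, ybar) ≤ 0
          rw [← hy]
          exact hq0
        have h1 : dS₀ ≤ dist p₀.1 qb.1 := infDist_le_dist_of_mem hqS
        have h2 : γ * dS₀ ≤ F₀ := by
          calc γ * dS₀ ≤ γ * (F₀ / γ) :=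
            mul_le_mul_of_nonneg_left (h1.trans hdxq) hγ0.le
          _ = F₀ := by field_simp
        linarith
      · -- f(qb) > 0
        have hgqb : fplus f qb = f qb := max_eq_left hq0.le
        have hfqbF : f qb ≤ ((F₀ : ℝ) : EReal) := by
          calc f qb = fplus f qb := hgqb.symm
          _ ≤ fplus f qb + ((γ * drho ρ p₀ qb : ℝ) : EReal) :=
              le_add_of_nonneg_right (by
                exact_mod_cast mul_nonneg hγ0.le (drho_nonneg _ _))
          _ ≤ fplus f p₀ := hqb1
          _ = ((F₀ : ℝ) : EReal) := hgp₀
        have hc1 : dist qb.1 xbar < ρ := by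
          calc dist qb.1 xbar ≤ dist qb.1 p₀.1 + dist p₀.1 xbar := dist_triangle _ _ _
          _ < F₀ / γ + δ := by
              rw [dist_comm]
              exact add_lt_add_of_le_of_lt hdxq hpx
          _ < δ + δ := by linarith [hF₀γδ]
          _ ≤ ρ := by linarith [hδ3]
        have hc3 : f qb < (ρ : EReal) := by
          apply lt_of_le_of_lt hfqbF
          exact_mod_cast lt_of_lt_of_le hF₀δ hγδρ
        have hns := hslope qb hc1 hq0 hc3
        have hqb1x : dist qb.1 xbar ≤ r / 2 := by
          have := hc1
          have h1 : dist qb.1 xbar < δ + δ := by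
            calc dist qb.1 xbar ≤ dist qb.1 p₀.1 + dist p₀.1 xbar := dist_triangle _ _ _
            _ < F₀ / γ + δ := by
                rw [dist_comm]
                exact add_lt_add_of_le_of_lt hdxq hpx
            _ < δ + δ := by linarith [hF₀γδ]
          linarith [hδ1]
        have hqb2y : dist qb.2 ybar ≤ r / 2 := by
          have h1 : ρ * dist p₀.2 qb.2 ≤ drho ρ p₀ qb := le_max_right _ _
          have h2 : dist p₀.2 qb.2 * (γ * ρ) ≤ F₀ := by
            calc dist p₀.2 qb.2 * (γ * ρ) = γ * (ρ * dist p₀.2 qb.2) := by ring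
            _ ≤ γ * drho ρ p₀ qb := mul_le_mul_of_nonneg_left h1 hγ0.le
            _ ≤ F₀ := hdrho0
          have h3 : γ * δ ≤ γ * (ρ * r / 4) := mul_le_mul_of_nonneg_left hδ2 hγ0.le
          have h3' : γ * δ ≤ (r / 4) * (γ * ρ) := by
            calc γ * δ ≤ γ * (ρ * r / 4) := h3
            _ = (r / 4) * (γ * ρ) := by ring
          have h4 : dist p₀.2 qb.2 ≤ r / 4 := by
            have hK : (0 : ℝ) < γ * ρ := mul_pos hγ0 hρ0
            have h5 : dist p₀.2 qb.2 * (γ * ρ) ≤ (r / 4) * (γ * ρ) := by linarith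
            exact le_of_mul_le_mul_right h5 hK
          calc dist qb.2 ybar ≤ dist qb.2 p₀.2 + dist p₀.2 ybar := dist_triangle _ _ _
          _ ≤ r / 4 + r / 4 := add_le_add (by rw [dist_comm]; exact h4) hy₀r
          _ = r / 2 := by ring
        have hfqb_top : f qb ≠ ⊤ := ne_top_of_le_ne_top (EReal.coe_ne_top _) hfqbF
        have hnsle : nslope f ρ qb ≤ (γ : EReal) := by
          unfold nslope
          rw [if_neg hfqb_top]
          apply iSup₂_le
          intro q hq
          have hdpos : 0 < drho ρ qb q := drho_pos hρ0 (Ne.symm hq)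
          apply equot_le hdpos
          apply max_le
          · rcases Classical.em (q ∈ W) with hqW | hqW
            · have h2 := hqb2 q hqW
              rw [hgqb] at h2
              rcases eq_or_ne (fplus f q) ⊤ with htq | htq
              · rw [htq, EReal.sub_top]
                exact bot_le
              · have hfq_ne_bot : fplus f q ≠ ⊥ := by
                  intro hbb
                  have h9 : (0 : EReal) ≤ fplus f q := le_max_right _ _
                  rw [hbb] at h9
                  exact absurd h9 (by simp)
                rw [EReal.sub_le_iff_le_add (Or.inl hfq_ne_bot) (Or.inl htq)]
                exact h2.trans (le_of_eq (add_comm _ _))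
            · have hout : min (r / 2) (ρ * (r / 2)) ≤ drho ρ qb q := by
                have hq_notW : r < dist q (xbar, ybar) := by
                  by_contra hle2
                  push_neg at hle2
                  exact hqW (Metric.mem_closedBall.2 hle2)
                rw [Prod.dist_eq] at hq_notW
                rcases lt_max_iff.1 hq_notW with hx | hy
                · have h5 : dist q.1 xbar ≤ dist q.1 qb.1 + dist qb.1 xbar :=
                    dist_triangle _ _ _
                  have h6 : r / 2 ≤ dist qb.1 q.1 := by
                    rw [dist_comm]
                    linarith [hqb1x]
                  exact le_trans (min_le_left _ _) (le_trans h6 (dist_fst_le_drho _ _))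
                · have h5 : dist q.2 ybar ≤ dist q.2 qb.2 + dist qb.2 ybar :=
                    dist_triangle _ _ _
                  have h6 : r / 2 ≤ dist qb.2 q.2 := by
                    rw [dist_comm]
                    linarith [hqb2y]
                  have h7 : ρ * (r / 2) ≤ ρ * dist qb.2 q.2 :=
                    mul_le_mul_of_nonneg_left h6 hρ0.le
                  exact le_trans (min_le_right _ _) (le_trans h7 (le_max_right _ _))
              calc f qb - fplus f q ≤ f qb - 0 :=
                  EReal.sub_le_sub (le_refl _) (le_max_right _ _)
              _ = f qb := by rw [sub_eq_add_neg, neg_zero, add_zero]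
              _ ≤ ((F₀ : ℝ) : EReal) := hfqbF
              _ ≤ ((γ * drho ρ qb q : ℝ) : EReal) := by
                  have h6 : δ ≤ min (r / 2) (ρ * (r / 2)) := by
                    apply le_min
                    · linarith [hδ1]
                    · have : ρ * r / 4 ≤ ρ * (r / 2) := by
                        nlinarith [mul_nonneg hρ0.le hr0.le]
                      linarith [hδ2]
                  have h7 : F₀ ≤ γ * drho ρ qb q :=
                    le_trans hF₀δ.le (mul_le_mul_of_nonneg_left (h6.trans hout) hγ0.le)
                  exact_mod_cast h7
          · exact_mod_cast mul_nonneg hγ0.le (drho_nonneg qb q)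
        exact absurd hns (not_lt.2 hnsle)
    unfold erMod
    rw [← hS]
    refine Filter.le_liminf_of_le (by isBoundedDefault) ?_
    rw [Filter.eventually_inf_principal]
    have hb : (Prod.fst : X × Y → X) ⁻¹' (Metric.ball xbar δ) ∈
        (𝓝 xbar).comap (Prod.fst : X × Y → X) :=
      Filter.preimage_mem_comap (Metric.ball_mem_nhds xbar hδ0)
    refine Filter.eventually_of_mem hb ?_
    intro p hp hp2
    exact key p (Metric.mem_ball.1 hp) hp2
  exact le_antisymm part1 part2


end HolderPaper
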